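/- arXiv:2301.12649 — 3 statements merged into one kernel-verified Lean document; each statement's English description precedes it below -/
import Mathlib

section
/- Let y = Xβ + ε with ε ~ N(0, σ²I_n), X ∈ ℝ^{n×p} of full column rank, n ≥ 1, and β̄ = (X^TX)^{-1}X^T y. Define the STLS non-active set estimate K̂ = {j : |β̄_j| ≤ σ√(2 log(n) · [(X^TX)^{-1}]_{jj})}. Then the false discovery probability satisfies 1 − P(K_β ⊆ K̂) ≤ |K_β|/n, i.e., with probability at least 1 − |K_β|/n every truly zero coefficient is thresholded to zero. (Lemma 3.2(i), with q = |K_β|.) -/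
open MeasureTheory ProbabilityTheory Matrix
open scoped ENNReal NNReal

lemma my_gaussian_neg_symm (v : ℝ≥0) :
    (gaussianReal 0 v).map (fun x => -x) = gaussianReal 0 v := by
  have h := gaussianReal_map_const_mul (μ := 0) (v := v) (-1)
  have h1 : (⟨(-1:ℝ)^2, sq_nonneg _⟩ : ℝ≥0) = 1 := by ext; norm_num
  simpa [h1] using h

lemma my_gaussian_Ioi_zero (v : ℝ≥0) : gaussianReal 0 v (Set.Ioi (0:ℝ)) ≤ 1/2 := by
  have hIio : gaussianReal 0 v (Set.Iio (0:ℝ)) = gaussianReal 0 v (Set.Ioi (0:ℝ)) := by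
    conv_lhs => rw [← my_gaussian_neg_symm v]
    rw [Measure.map_apply measurable_neg measurableSet_Iio]
    congr 1
    ext x
    simp
  have hdisj : Disjoint (Set.Ioi (0:ℝ)) (Set.Iio 0) := by
    simp [Set.disjoint_left]
    intro a ha
    linarith
  have hsum : gaussianReal 0 v (Set.Ioi (0:ℝ)) + gaussianReal 0 v (Set.Iio 0)
      = gaussianReal 0 v (Set.Ioi (0:ℝ) ∪ Set.Iio 0) :=
    (measure_union hdisj measurableSet_Iio).symm
  have hle1 : gaussianReal 0 v (Set.Ioi (0:ℝ) ∪ Set.Iio 0) ≤ 1 := by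
    simpa using measure_mono (μ := gaussianReal 0 v) (Set.subset_univ (Set.Ioi (0:ℝ) ∪ Set.Iio 0)) |>.trans_eq measure_univ
  have h2 : gaussianReal 0 v (Set.Ioi (0:ℝ)) + gaussianReal 0 v (Set.Iio 0) ≤ 1 := by
    rw [hsum]; exact hle1
  rw [hIio] at h2
  rw [ENNReal.le_div_iff_mul_le (by norm_num) (by norm_num), mul_two]
  exact h2

lemma my_gaussian_tail (v : ℝ≥0) (t : ℝ) (ht : 0 ≤ t) :
    gaussianReal 0 v {x : ℝ | t < |x|} ≤ ENNReal.ofReal (Real.exp (-(t^2/(2*(v:ℝ))))) := by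
  have hSmeas : MeasurableSet {x : ℝ | t < |x|} :=
    measurableSet_lt measurable_const measurable_id.abs
  by_cases hv : v = 0
  · subst hv
    rw [gaussianReal_zero_var, Measure.dirac_apply' _ hSmeas]
    have : (0:ℝ) ∉ {x : ℝ | t < |x|} := by simp; linarith
    simp [Set.indicator_of_notMem this]
  · have hv' : (0:ℝ) < v := by positivity
    set e := Real.exp (-(t^2/(2*(v:ℝ)))) with he
    have hepos : 0 < e := Real.exp_pos _
    -- split the set
    have hS : {x : ℝ | t < |x|} = Set.Ioi t ∪ Set.Iio (-t) := by
      ext x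
      simp only [Set.mem_setOf_eq, Set.mem_union, Set.mem_Ioi, Set.mem_Iio, lt_abs, lt_neg]
    -- symmetry
    have hIio : gaussianReal 0 v (Set.Iio (-t)) = gaussianReal 0 v (Set.Ioi t) := by
      conv_lhs => rw [← my_gaussian_neg_symm v]
      rw [Measure.map_apply measurable_neg measurableSet_Iio]
      congr 1
      ext x
      simp
    -- half bound for shifted gaussian
    have hhalf : gaussianReal t v (Set.Ioi t) ≤ 1/2 := by
      have hmap : gaussianReal t v = (gaussianReal 0 v).map (· + t) := by
        rw [gaussianReal_map_add_const, zero_add]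
      rw [hmap, Measure.map_apply (measurable_add_const t) measurableSet_Ioi]
      have : (· + t) ⁻¹' Set.Ioi t = Set.Ioi (0:ℝ) := by
        ext x; simp
      rw [this]
      exact my_gaussian_Ioi_zero v
    set I0 := ∫ x in Set.Ioi t, gaussianPDFReal 0 v x with hI0
    set It := ∫ x in Set.Ioi t, gaussianPDFReal t v x with hIt
    have hIt_half : It ≤ 1/2 := by
      have := gaussianReal_apply_eq_integral t hv (Set.Ioi t)
      rw [this] at hhalf
      have h12 : (1/2 : ℝ≥0∞) = ENNReal.ofReal (1/2 : ℝ) := by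
        rw [ENNReal.ofReal_div_of_pos (by norm_num)]
        norm_num
      rw [h12] at hhalf
      exact (ENNReal.ofReal_le_ofReal_iff (by norm_num)).mp hhalf
    have hI0_le : I0 ≤ e * It := by
      rw [hI0, hIt, ← integral_const_mul]
      refine setIntegral_mono_on (integrable_gaussianPDFReal 0 v).integrableOn
        ((integrable_gaussianPDFReal t v).const_mul e).integrableOn measurableSet_Ioi ?_
      intro x hx
      rw [Set.mem_Ioi] at hx
      simp only [gaussianPDFReal, sub_zero]
      have h2v : (0:ℝ) < 2*(v:ℝ) := by positivity
      have hkey : Real.exp (-x^2/(2*(v:ℝ))) ≤ e * Real.exp (-(x-t)^2/(2*(v:ℝ))) := by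
        rw [he, ← Real.exp_add]
        refine Real.exp_le_exp.mpr ?_
        rw [← neg_div, ← add_div, div_le_div_iff₀ h2v h2v]
        nlinarith [mul_nonneg ht (le_of_lt (sub_pos.mpr hx)), h2v.le,
          mul_nonneg (mul_nonneg ht (le_of_lt (sub_pos.mpr hx))) h2v.le]
      rw [mul_left_comm]
      exact mul_le_mul_of_nonneg_left hkey (by positivity)
    have hI0_nonneg : 0 ≤ I0 :=
      setIntegral_nonneg measurableSet_Ioi (fun x _ => gaussianPDFReal_nonneg _ _ _)
    have hmeasI0 : gaussianReal 0 v (Set.Ioi t) = ENNReal.ofReal I0 :=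
      gaussianReal_apply_eq_integral 0 hv (Set.Ioi t)
    calc gaussianReal 0 v {x : ℝ | t < |x|}
        ≤ gaussianReal 0 v (Set.Ioi t) + gaussianReal 0 v (Set.Iio (-t)) := by
          rw [hS]
          exact measure_union_le (μ := gaussianReal 0 v) (Set.Ioi t) (Set.Iio (-t))
      _ = ENNReal.ofReal I0 + ENNReal.ofReal I0 := by rw [hIio, hmeasI0]
      _ = ENNReal.ofReal (I0 + I0) := (ENNReal.ofReal_add hI0_nonneg hI0_nonneg).symm
      _ ≤ ENNReal.ofReal e := by
          refine ENNReal.ofReal_le_ofReal ?_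
          nlinarith

/-- False discovery probability bound for the STLS non-active set estimate
`K̂ = {j : |β̄ⱼ| ≤ σ√(2 log n · [(XᵀX)⁻¹]ⱼⱼ)}`: with `K_β = {j : βⱼ = 0}` and `q = |K_β|`,
`1 − P(K_β ⊆ K̂) ≤ q/n`. -/
theorem stls_false_discovery_probability
    {Ω : Type*} [MeasurableSpace Ω] (P : Measure Ω) [IsProbabilityMeasure P]
    {n p : ℕ} (hn : 1 ≤ n)
    (X : Matrix (Fin n) (Fin p) ℝ) (hX : IsUnit (Xᵀ * X).det)
    (β : Fin p → ℝ) (σ : ℝ) (hσ : 0 < σ)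
    (ε : Ω → Fin n → ℝ) (hεmeas : Measurable ε)
    (hεgauss : ∀ c : Fin n → ℝ,
      P.map (fun ω => c ⬝ᵥ ε ω) = gaussianReal 0 (Real.toNNReal (σ ^ 2 * (c ⬝ᵥ c))))
    (y : Ω → Fin n → ℝ) (hy : ∀ ω, y ω = X.mulVec β + ε ω)
    (βbar : Ω → Fin p → ℝ)
    (hβbar : ∀ ω, βbar ω = (Xᵀ * X)⁻¹.mulVec (Xᵀ.mulVec (y ω))) :
    (1 : ℝ≥0∞) -
      P {ω | ∀ j : Fin p, β j = 0 →
        |βbar ω j| ≤ σ * Real.sqrt (2 * Real.log n * (Xᵀ * X)⁻¹ j j)}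
      ≤ ENNReal.ofReal (({j : Fin p | β j = 0} : Set (Fin p)).ncard / n) := by
  classical
  set A := (Xᵀ * X)⁻¹ with hA
  have hAX : A * (Xᵀ * X) = 1 := Matrix.nonsing_inv_mul _ hX
  have hAsymm : Aᵀ = A := by
    rw [hA, Matrix.transpose_nonsing_inv, Matrix.transpose_mul, Matrix.transpose_transpose]
  have hn' : (1:ℝ) ≤ (n:ℝ) := by exact_mod_cast hn
  have hnpos : (0:ℝ) < n := lt_of_lt_of_le one_pos hn'
  have hlogn : 0 ≤ Real.log n := Real.log_nonneg hn'
  -- βbar decomposition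
  have hbar : ∀ ω, βbar ω = β + (A * Xᵀ).mulVec (ε ω) := by
    intro ω
    rw [hβbar ω, hy ω, Matrix.mulVec_add, Matrix.mulVec_add, Matrix.mulVec_mulVec,
      Matrix.mulVec_mulVec]
    have h1 : A * Xᵀ * X = 1 := by rw [Matrix.mul_assoc, hAX]
    rw [h1, Matrix.one_mulVec, Matrix.mulVec_mulVec]
  -- event set and threshold notation
  set E := {ω | ∀ j : Fin p, β j = 0 →
      |βbar ω j| ≤ σ * Real.sqrt (2 * Real.log n * A j j)} with hE
  set K : Finset (Fin p) := Finset.univ.filter (fun j => β j = 0) with hK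
  -- per-index bound
  have key : ∀ j ∈ K,
      P {ω | σ * Real.sqrt (2 * Real.log n * A j j) < |βbar ω j|}
        ≤ ENNReal.ofReal (1/(n:ℝ)) := by
    intro j hjK
    have hj : β j = 0 := (Finset.mem_filter.mp hjK).2
    set c : Fin n → ℝ := fun i => (A * Xᵀ) j i with hc
    have hcomp : ∀ ω, βbar ω j = c ⬝ᵥ ε ω := by
      intro ω
      rw [hbar ω]
      show β j + ((A * Xᵀ).mulVec (ε ω)) j = c ⬝ᵥ ε ω
      rw [hj, zero_add]
      rfl
    have hcc : c ⬝ᵥ c = A j j := by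
      have h1 : c ⬝ᵥ c = ((A * Xᵀ) * (A * Xᵀ)ᵀ) j j := by
        simp [Matrix.mul_apply, dotProduct, Matrix.transpose_apply, hc, mul_comm]
      have h2 : (A * Xᵀ) * (A * Xᵀ)ᵀ = A := by
        rw [Matrix.transpose_mul, Matrix.transpose_transpose, hAsymm, ← Matrix.mul_assoc,
          Matrix.mul_assoc A Xᵀ X]
        have hXX : A * (Xᵀ * X) = 1 := hAX
        rw [hXX, Matrix.one_mul]
      rw [h1, h2]
    have hccnn : 0 ≤ c ⬝ᵥ c := Finset.sum_nonneg fun i _ => mul_self_nonneg _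
    have hApos : 0 < A j j := by
      rw [← hcc]
      refine lt_of_le_of_ne hccnn (Ne.symm ?_)
      intro h0
      have hc0 : c = 0 := dotProduct_self_eq_zero.mp h0
      have h1' : ((A * Xᵀ) * X) j j = 1 := by
        rw [Matrix.mul_assoc, hAX, Matrix.one_apply_eq]
      rw [Matrix.mul_apply] at h1'
      have : ∑ i, (A * Xᵀ) j i * X i j = 0 := by
        apply Finset.sum_eq_zero
        intro i _
        have : c i = 0 := congrFun hc0 i
        rw [hc] at this
        simp only [this, zero_mul]
      rw [this] at h1'
      exact one_ne_zero h1'.symm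
    set t := σ * Real.sqrt (2 * Real.log n * A j j) with htdef
    have ht0 : 0 ≤ t := mul_nonneg hσ.le (Real.sqrt_nonneg _)
    set f : Ω → ℝ := fun ω => c ⬝ᵥ ε ω with hf
    have hfm : Measurable f := by
      have : f = fun ω => ∑ i, c i * ε ω i := rfl
      rw [this]
      exact Finset.measurable_sum _ fun i _ =>
        ((measurable_pi_apply i).comp hεmeas).const_mul (c i)
    have hSmeas : MeasurableSet {x : ℝ | t < |x|} :=
      measurableSet_lt measurable_const measurable_id.abs
    have hset : {ω | t < |βbar ω j|} = f ⁻¹' {x | t < |x|} := by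
      ext ω
      simp only [Set.mem_setOf_eq, Set.mem_preimage, hcomp ω, hf]
    rw [hset, ← Measure.map_apply hfm hSmeas, hεgauss c]
    refine (my_gaussian_tail _ t ht0).trans ?_
    apply ENNReal.ofReal_le_ofReal
    have hvnn : 0 ≤ σ^2 * (c ⬝ᵥ c) := mul_nonneg (sq_nonneg _) hccnn
    have hvcoe : ((Real.toNNReal (σ^2 * (c ⬝ᵥ c)) : ℝ≥0) : ℝ) = σ^2 * A j j := by
      rw [Real.coe_toNNReal _ hvnn, hcc]
    have hlogA : 0 ≤ 2 * Real.log n * A j j := by positivity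
    have hexp : t^2 / (2 * ((Real.toNNReal (σ^2 * (c ⬝ᵥ c)) : ℝ≥0) : ℝ)) = Real.log n := by
      rw [hvcoe, htdef, mul_pow, Real.sq_sqrt hlogA]
      field_simp
    rw [hexp, Real.exp_neg, Real.exp_log hnpos, one_div]
  -- complement inclusion
  have hEc : Eᶜ ⊆ ⋃ j ∈ K, {ω | σ * Real.sqrt (2 * Real.log n * A j j) < |βbar ω j|} := by
    intro ω hω
    simp only [hE, Set.mem_compl_iff, Set.mem_setOf_eq, not_forall] at hω
    obtain ⟨j, hj, hlt⟩ := hω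
    simp only [Set.mem_iUnion, Set.mem_setOf_eq]
    exact ⟨j, Finset.mem_filter.mpr ⟨Finset.mem_univ j, hj⟩, lt_of_not_ge hlt⟩
  -- union bound
  have hPEc : P Eᶜ ≤ (K.card : ℝ≥0∞) * ENNReal.ofReal (1/(n:ℝ)) := by
    calc P Eᶜ ≤ P (⋃ j ∈ K, {ω | σ * Real.sqrt (2 * Real.log n * A j j) < |βbar ω j|}) :=
          measure_mono hEc
      _ ≤ ∑ j ∈ K, P {ω | σ * Real.sqrt (2 * Real.log n * A j j) < |βbar ω j|} :=
          measure_biUnion_finset_le K _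
      _ ≤ ∑ _j ∈ K, ENNReal.ofReal (1/(n:ℝ)) := Finset.sum_le_sum key
      _ = (K.card : ℝ≥0∞) * ENNReal.ofReal (1/(n:ℝ)) := by
          rw [Finset.sum_const, nsmul_eq_mul]
  -- 1 - P E ≤ P Eᶜ
  have h1P : (1 : ℝ≥0∞) - P E ≤ P Eᶜ := by
    have hu : (1 : ℝ≥0∞) ≤ P E + P Eᶜ := by
      have := measure_union_le (μ := P) E Eᶜ
      rw [Set.union_compl_self, measure_univ] at this
      exact this
    rw [tsub_le_iff_right]
    rw [add_comm]
    exact hu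
  -- cardinality identification
  have hcard : ({j : Fin p | β j = 0} : Set (Fin p)).ncard = K.card := by
    rw [Set.ncard_eq_toFinset_card', Set.toFinset_setOf]
  refine h1P.trans (hPEc.trans ?_)
  rw [hcard]
  rw [← ENNReal.ofReal_natCast K.card, ← ENNReal.ofReal_mul (by positivity)]
  apply ENNReal.ofReal_le_ofReal
  rw [mul_one_div]
end

section
/- Let y = Xβ + ε with ε ~ N(0, σ²I_n), X ∈ ℝ^{n×p} of full column rank, n ≥ 1, ρ₁ > 0 the minimum eigenvalue of (1/n)X^TX, and β̄ = (X^TX)^{-1}X^T y. Let K̂ = {j : |β̄_j| ≤ σ√(2 log(n) · [(X^TX)^{-1}]_{jj})}, m = |J_β| ≥ 1, |β_{(1)}| = min_{j ∈ J_β}|β_j|, and u = √(nρ₁)·|β_{(1)}|/σ − √(2 log n). If u ≥ √(2 log m), then the true discovery probability satisfies P(K̂ ⊆ K_β) ≥ 1 − 2 exp( −(1/2)( u − √(2 log m) )² ), i.e., with this probability no active coefficient is thresholded to zero. (Lemma 3.2(ii), where m = p − q_{K_β} is the number of active coefficients.) -/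
open MeasureTheory ProbabilityTheory Matrix
open scoped NNReal ENNReal

section Aux
open Real
open scoped NNReal ENNReal

lemma pdf_two_sided_bound (v : ℝ≥0) {t x : ℝ} (ht : 0 ≤ t) (hx : t ≤ |x|) :
    gaussianPDFReal 0 v x
      ≤ Real.exp (-t ^ 2 / (2 * v)) * (gaussianPDFReal t v x + gaussianPDFReal (-t) v x) := by
  rcases eq_or_ne v 0 with hv | hv
  · simp [hv]
  have hv0 : (0 : ℝ) < v := lt_of_le_of_ne v.coe_nonneg (by exact_mod_cast (Ne.symm hv))
  have hc : (0:ℝ) ≤ (√(2 * π * (v:ℝ)))⁻¹ := by positivity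
  rcases le_or_gt 0 x with hx0 | hx0
  · have hxt : t ≤ x := by rwa [abs_of_nonneg hx0] at hx
    have key : gaussianPDFReal 0 v x ≤ Real.exp (-t ^ 2 / (2 * v)) * gaussianPDFReal t v x := by
      unfold gaussianPDFReal
      calc (√(2 * π * (v:ℝ)))⁻¹ * rexp (-(x - 0) ^ 2 / (2 * v))
          ≤ (√(2 * π * (v:ℝ)))⁻¹ * (rexp (-t ^ 2 / (2 * v)) * rexp (-(x - t) ^ 2 / (2 * v))) := by
            refine mul_le_mul_of_nonneg_left ?_ hc
            rw [← Real.exp_add]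
            refine Real.exp_le_exp.mpr ?_
            rw [← add_div, div_le_div_iff_of_pos_right (by positivity)]
            nlinarith [mul_nonneg ht (sub_nonneg.mpr hxt)]
        _ = _ := mul_left_comm _ _ _
    have h2 := gaussianPDFReal_nonneg (-t) v x
    nlinarith [Real.exp_pos (-t ^ 2 / (2 * (v:ℝ)))]
  · have hxt : x ≤ -t := by rw [abs_of_neg hx0] at hx; linarith
    have key : gaussianPDFReal 0 v x ≤ Real.exp (-t ^ 2 / (2 * v)) * gaussianPDFReal (-t) v x := by
      unfold gaussianPDFReal
      calc (√(2 * π * (v:ℝ)))⁻¹ * rexp (-(x - 0) ^ 2 / (2 * v))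
          ≤ (√(2 * π * (v:ℝ)))⁻¹ * (rexp (-t ^ 2 / (2 * v)) * rexp (-(x - -t) ^ 2 / (2 * v))) := by
            refine mul_le_mul_of_nonneg_left ?_ hc
            rw [← Real.exp_add]
            refine Real.exp_le_exp.mpr ?_
            rw [← add_div, div_le_div_iff_of_pos_right (by positivity)]
            nlinarith [mul_nonneg ht (sub_nonneg.mpr (neg_le_neg hxt))]
        _ = _ := mul_left_comm _ _ _
    have h2 := gaussianPDFReal_nonneg t v x
    nlinarith [Real.exp_pos (-t ^ 2 / (2 * (v:ℝ)))]

lemma gauss_tail (v : ℝ≥0) {t : ℝ} (ht : 0 ≤ t) :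
    gaussianReal 0 v {x | t ≤ |x|} ≤ ENNReal.ofReal (2 * Real.exp (-t ^ 2 / (2 * v))) := by
  rcases eq_or_ne v 0 with hv | hv
  · subst hv
    have h1 : gaussianReal 0 0 {x | t ≤ |x|} ≤ 1 := prob_le_one
    refine h1.trans ?_
    simp only [NNReal.coe_zero, mul_zero, div_zero, Real.exp_zero, mul_one]
    norm_num
  · rw [gaussianReal_apply 0 hv]
    have hmeas : Measurable fun x => ENNReal.ofReal (Real.exp (-t ^ 2 / (2 * v)))
        * (gaussianPDF t v x + gaussianPDF (-t) v x) :=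
      ((measurable_gaussianPDF t v).add (measurable_gaussianPDF (-t) v)).const_mul _
    calc ∫⁻ x in {x | t ≤ |x|}, gaussianPDF 0 v x
        ≤ ∫⁻ x in {x | t ≤ |x|}, ENNReal.ofReal (Real.exp (-t ^ 2 / (2 * v)))
            * (gaussianPDF t v x + gaussianPDF (-t) v x) := by
          refine setLIntegral_mono hmeas (fun x hx => ?_)
          have h1 := pdf_two_sided_bound v ht hx
          calc gaussianPDF 0 v x = ENNReal.ofReal (gaussianPDFReal 0 v x) := rfl
            _ ≤ ENNReal.ofReal (Real.exp (-t ^ 2 / (2 * v)) *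
                (gaussianPDFReal t v x + gaussianPDFReal (-t) v x)) := ENNReal.ofReal_le_ofReal h1
            _ = _ := by
                rw [ENNReal.ofReal_mul (Real.exp_nonneg _),
                  ENNReal.ofReal_add (gaussianPDFReal_nonneg _ _ _) (gaussianPDFReal_nonneg _ _ _)]
                rfl
      _ ≤ ∫⁻ x, ENNReal.ofReal (Real.exp (-t ^ 2 / (2 * v)))
            * (gaussianPDF t v x + gaussianPDF (-t) v x) := setLIntegral_le_lintegral _ _
      _ = ENNReal.ofReal (Real.exp (-t ^ 2 / (2 * v))) * (1 + 1) := by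
          rw [lintegral_const_mul (f := fun x => gaussianPDF t v x + gaussianPDF (-t) v x) _
              ((measurable_gaussianPDF t v).add (measurable_gaussianPDF (-t) v)),
            lintegral_add_left (measurable_gaussianPDF _ _),
            lintegral_gaussianPDF_eq_one _ hv, lintegral_gaussianPDF_eq_one _ hv]
      _ = ENNReal.ofReal (2 * Real.exp (-t ^ 2 / (2 * v))) := by
          rw [ENNReal.ofReal_mul (by norm_num : (0:ℝ) ≤ 2), mul_comm]
          congr 1
          norm_num

end Aux

/-- True discovery probability bound for the STLS non-active set estimate
`K̂ = {j : |β̄ⱼ| ≤ σ√(2 log n · [(XᵀX)⁻¹]ⱼⱼ)}`: with `ρ₁ > 0` the minimum eigenvalue of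
`(1/n)XᵀX` (encoded by the Rayleigh-quotient lower bound together with its attainment),
`m = |J_β| ≥ 1`, `b₁ = min_{j ∈ J_β} |βⱼ|` and `u = √(nρ₁)·b₁/σ − √(2 log n)`, if
`u ≥ √(2 log m)` then `P(K̂ ⊆ K_β) ≥ 1 − 2 exp(−(1/2)(u − √(2 log m))²)`. -/
theorem stls_true_discovery_probability
    {Ω : Type*} [MeasurableSpace Ω] (P : Measure Ω) [IsProbabilityMeasure P]
    {n p : ℕ} (hn : 1 ≤ n)
    (X : Matrix (Fin n) (Fin p) ℝ) (hX : IsUnit (Xᵀ * X).det)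
    (ρ₁ : ℝ) (hρ₁ : 0 < ρ₁)
    (hmin : ∀ v : Fin p → ℝ, (n : ℝ) * ρ₁ * (v ⬝ᵥ v) ≤ v ⬝ᵥ (Xᵀ * X).mulVec v)
    (hattain : ∃ v : Fin p → ℝ, v ≠ 0 ∧ (n : ℝ) * ρ₁ * (v ⬝ᵥ v) = v ⬝ᵥ (Xᵀ * X).mulVec v)
    (β : Fin p → ℝ) (σ : ℝ) (hσ : 0 < σ)
    (ε : Ω → Fin n → ℝ) (hεmeas : Measurable ε)
    (hεgauss : ∀ c : Fin n → ℝ,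
      P.map (fun ω => c ⬝ᵥ ε ω) = gaussianReal 0 (Real.toNNReal (σ ^ 2 * (c ⬝ᵥ c))))
    (y : Ω → Fin n → ℝ) (hy : ∀ ω, y ω = X.mulVec β + ε ω)
    (βbar : Ω → Fin p → ℝ)
    (hβbar : ∀ ω, βbar ω = (Xᵀ * X)⁻¹.mulVec (Xᵀ.mulVec (y ω)))
    (m : ℕ) (hm : m = ({j : Fin p | β j ≠ 0} : Set (Fin p)).ncard) (hm1 : 1 ≤ m)
    (b₁ : ℝ) (hb₁ : IsLeast {x : ℝ | ∃ j : Fin p, β j ≠ 0 ∧ x = |β j|} b₁)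
    (u : ℝ) (hu : u = Real.sqrt ((n : ℝ) * ρ₁) * b₁ / σ - Real.sqrt (2 * Real.log n))
    (hularge : Real.sqrt (2 * Real.log m) ≤ u) :
    ENNReal.ofReal (1 - 2 * Real.exp (-(1 / 2) * (u - Real.sqrt (2 * Real.log m)) ^ 2))
      ≤ P {ω | ∀ j : Fin p,
          |βbar ω j| ≤ σ * Real.sqrt (2 * Real.log n * (Xᵀ * X)⁻¹ j j) → β j = 0} := by
  classical
  set M := (Xᵀ * X)⁻¹ with hM
  have hMsymm : Mᵀ = M := by
    rw [hM, Matrix.transpose_nonsing_inv, Matrix.transpose_mul, Matrix.transpose_transpose]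
  have hinvmul : M * (Xᵀ * X) = 1 := Matrix.nonsing_inv_mul _ hX
  have hmulinv : (Xᵀ * X) * M = 1 := Matrix.mul_nonsing_inv _ hX
  -- the noise projections
  set f : Fin p → Ω → ℝ := fun j ω => (M * Xᵀ) j ⬝ᵥ ε ω with hf
  have hfmeas : ∀ j, Measurable (f j) := by
    intro j
    have : f j = fun ω => ∑ i, (M * Xᵀ) j i * ε ω i := rfl
    rw [this]
    exact Finset.measurable_sum _ fun i _ =>
      measurable_const.mul ((measurable_pi_apply i).comp hεmeas)
  -- decomposition
  have hdec : ∀ ω j, βbar ω j = β j + f j ω := by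
    intro ω j
    have hv : βbar ω = β + (M * Xᵀ).mulVec (ε ω) := by
      rw [hβbar, hy, Matrix.mulVec_add, Matrix.mulVec_add, Matrix.mulVec_mulVec,
        Matrix.mulVec_mulVec, Matrix.mulVec_mulVec, Matrix.mul_assoc, hinvmul,
        Matrix.one_mulVec]
    rw [hv]
    rfl
  -- variance identity
  have hcc : ∀ j, (M * Xᵀ) j ⬝ᵥ (M * Xᵀ) j = M j j := by
    intro j
    have hA : (M * Xᵀ) * (M * Xᵀ)ᵀ = M := by
      rw [Matrix.transpose_mul, Matrix.transpose_transpose, hMsymm,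
        Matrix.mul_assoc M Xᵀ (X * M), ← Matrix.mul_assoc Xᵀ X M, hmulinv, Matrix.mul_one]
    have h2 : ((M * Xᵀ) * (M * Xᵀ)ᵀ) j j = (M * Xᵀ) j ⬝ᵥ (M * Xᵀ) j := by
      simp [Matrix.mul_apply, dotProduct, Matrix.transpose_apply, mul_comm]
    rw [← h2, hA]
  have hs0 : ∀ j, 0 ≤ M j j := by
    intro j
    rw [← hcc j]
    exact Finset.sum_nonneg fun i _ => mul_self_nonneg _
  have hnρ : (0:ℝ) < (n : ℝ) * ρ₁ := by
    have : (0:ℝ) < (n:ℝ) := by exact_mod_cast hn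
    positivity
  have hsle : ∀ j, ((n : ℝ) * ρ₁) * M j j ≤ 1 := by
    intro j
    set v : Fin p → ℝ := M.mulVec (Pi.single j 1) with hvdef
    have hvj : v j = M j j := by
      simp [hvdef, Matrix.mulVec, dotProduct, Pi.single_apply]
    have hXv : (Xᵀ * X).mulVec v = Pi.single j 1 := by
      rw [hvdef, Matrix.mulVec_mulVec, hmulinv, Matrix.one_mulVec]
    have hv1 : v ⬝ᵥ (Xᵀ * X).mulVec v = M j j := by
      rw [hXv, ← hvj]
      simp [dotProduct, Pi.single_apply]
    have hv2 : (M j j) ^ 2 ≤ v ⬝ᵥ v := by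
      have : v j * v j ≤ ∑ k, v k * v k :=
        Finset.single_le_sum (fun k _ => mul_self_nonneg (v k)) (Finset.mem_univ j)
      rw [hvj] at this
      calc (M j j) ^ 2 = M j j * M j j := sq (M j j) ▸ by ring
        _ ≤ ∑ k, v k * v k := this
        _ = v ⬝ᵥ v := rfl
    have h3 : ((n : ℝ) * ρ₁) * (M j j) ^ 2 ≤ M j j := by
      calc ((n : ℝ) * ρ₁) * (M j j) ^ 2 ≤ ((n : ℝ) * ρ₁) * (v ⬝ᵥ v) :=
            mul_le_mul_of_nonneg_left hv2 hnρ.le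
        _ ≤ v ⬝ᵥ (Xᵀ * X).mulVec v := hmin v
        _ = M j j := hv1
    rcases eq_or_lt_of_le (hs0 j) with hs | hs
    · rw [← hs]; norm_num
    · have := le_of_mul_le_mul_right (by nlinarith : ((n : ℝ) * ρ₁ * M j j) * M j j ≤ 1 * M j j) hs
      linarith
  -- basic positivity facts
  obtain ⟨⟨j₀, hj₀, hb₀⟩, hlb⟩ := hb₁
  have hb₁pos : 0 < b₁ := hb₀ ▸ abs_pos.mpr hj₀
  have hlogn : (0:ℝ) ≤ Real.log n := Real.log_nonneg (by exact_mod_cast hn)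
  have hlogm : (0:ℝ) ≤ Real.log m := Real.log_nonneg (by exact_mod_cast hm1)
  set w := Real.sqrt (2 * Real.log m) with hw
  have hw0 : 0 ≤ w := Real.sqrt_nonneg _
  have hu0 : 0 ≤ u := hw0.trans hularge
  -- threshold bound
  have hthr : ∀ j, σ * Real.sqrt (M j j) * u ≤ b₁ - σ * Real.sqrt (2 * Real.log n * M j j) := by
    intro j
    have hq : Real.sqrt ((n : ℝ) * ρ₁) * Real.sqrt (M j j) ≤ 1 := by
      rw [← Real.sqrt_mul hnρ.le]
      exact Real.sqrt_le_one.mpr (hsle j)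
    have hL : Real.sqrt (2 * Real.log n * M j j)
        = Real.sqrt (2 * Real.log n) * Real.sqrt (M j j) := Real.sqrt_mul (by positivity) _
    have hab : Real.sqrt ((n : ℝ) * ρ₁) * b₁ = σ * (u + Real.sqrt (2 * Real.log n)) := by
      have h1 : u + Real.sqrt (2 * Real.log n) = Real.sqrt ((n : ℝ) * ρ₁) * b₁ / σ := by
        rw [hu]; ring
      rw [h1]
      field_simp
    have key : σ * Real.sqrt (M j j) * (u + Real.sqrt (2 * Real.log n)) ≤ b₁ := by
      calc σ * Real.sqrt (M j j) * (u + Real.sqrt (2 * Real.log n))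
          = Real.sqrt (M j j) * (σ * (u + Real.sqrt (2 * Real.log n))) := by ring
        _ = Real.sqrt (M j j) * (Real.sqrt ((n : ℝ) * ρ₁) * b₁) := by rw [← hab]
        _ = (Real.sqrt ((n : ℝ) * ρ₁) * Real.sqrt (M j j)) * b₁ := by ring
        _ ≤ 1 * b₁ := mul_le_mul_of_nonneg_right hq hb₁pos.le
        _ = b₁ := one_mul _
    rw [hL]
    nlinarith [key]
  -- the exceptional events
  set B : Fin p → Set Ω :=
    fun j => {ω | b₁ - σ * Real.sqrt (2 * Real.log n * M j j) ≤ |f j ω|} with hB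
  have hSmeas : ∀ t : ℝ, MeasurableSet {x : ℝ | t ≤ |x|} :=
    fun t => measurableSet_le measurable_const measurable_abs
  have hBmeas : ∀ j, MeasurableSet (B j) :=
    fun j => measurableSet_le measurable_const (hfmeas j).abs
  have htail : ∀ j, β j ≠ 0 → P (B j) ≤ ENNReal.ofReal (2 * Real.exp (-u ^ 2 / 2)) := by
    intro j hj
    set t := b₁ - σ * Real.sqrt (2 * Real.log n * M j j) with htdef
    have hsq : σ * Real.sqrt (M j j) * u ≤ t := hthr j
    have ht0 : 0 ≤ t := le_trans (by positivity) hsq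
    have hmap : P (B j) = (gaussianReal 0
        (Real.toNNReal (σ ^ 2 * ((M * Xᵀ) j ⬝ᵥ (M * Xᵀ) j)))) {x | t ≤ |x|} := by
      rw [← hεgauss ((M * Xᵀ) j), Measure.map_apply (hfmeas j) (hSmeas t)]
      rfl
    rw [hmap, hcc j]
    rcases eq_or_lt_of_le (hs0 j) with hs | hs
    · have hV : Real.toNNReal (σ ^ 2 * M j j) = 0 := by rw [← hs]; simp
      have htpos : 0 < t := by
        have h0 : Real.sqrt (2 * Real.log n * M j j) = 0 := by rw [← hs]; simp
        rw [htdef, h0]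
        simpa using hb₁pos
      rw [hV, gaussianReal_zero_var, Measure.dirac_apply' _ (hSmeas t)]
      have h0 : (0:ℝ) ∉ {x : ℝ | t ≤ |x|} := by
        simp only [Set.mem_setOf_eq, abs_zero, not_le]
        exact htpos
      rw [Set.indicator_of_notMem h0]
      exact zero_le
    · have hVc : ((Real.toNNReal (σ ^ 2 * M j j)) : ℝ) = σ ^ 2 * M j j :=
        Real.coe_toNNReal _ (by positivity)
      refine (gauss_tail _ ht0).trans (ENNReal.ofReal_le_ofReal ?_)
      refine mul_le_mul_of_nonneg_left (Real.exp_le_exp.mpr ?_) (by norm_num)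
      rw [hVc]
      have h2 : (σ * Real.sqrt (M j j) * u) ^ 2 ≤ t ^ 2 :=
        pow_le_pow_left₀ (by positivity) hsq 2
      have h3 : σ ^ 2 * M j j * u ^ 2 ≤ t ^ 2 := by
        have he : (σ * Real.sqrt (M j j) * u) ^ 2 = σ ^ 2 * M j j * u ^ 2 := by
          rw [mul_pow, mul_pow, Real.sq_sqrt (hs0 j)]
        linarith [he ▸ h2]
      rw [neg_div, neg_div, neg_le_neg_iff, div_le_div_iff₀ two_pos (by positivity)]
      nlinarith [h3]
  -- the active index set
  set J : Finset (Fin p) := Finset.univ.filter (fun j => β j ≠ 0) with hJ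
  have hcard : J.card = m := by
    rw [hm, Set.ncard_eq_toFinset_card']
    congr 1
    ext j
    simp [hJ]
  -- union bound
  set G : Set Ω := {ω | ∀ j : Fin p,
      |βbar ω j| ≤ σ * Real.sqrt (2 * Real.log n * M j j) → β j = 0} with hG
  have hsub : Gᶜ ⊆ ⋃ j ∈ J, B j := by
    intro ω hω
    simp only [hG, Set.mem_compl_iff, Set.mem_setOf_eq] at hω
    push_neg at hω
    obtain ⟨j, hle, hj⟩ := hω
    have hjJ : j ∈ J := by simp [hJ, hj]
    refine Set.mem_biUnion hjJ ?_
    have hb : b₁ ≤ |β j| := hlb ⟨j, hj, rfl⟩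
    have hd := hdec ω j
    have habs : |β j| - |βbar ω j| ≤ |f j ω| := by
      have h5 := abs_sub_abs_le_abs_sub (β j) (βbar ω j)
      have h6 : β j - βbar ω j = -(f j ω) := by rw [hd]; ring
      rw [h6, abs_neg] at h5
      exact h5
    show b₁ - σ * Real.sqrt (2 * Real.log n * M j j) ≤ |f j ω|
    linarith
  have hGmeas : MeasurableSet G := by
    rw [hG, Set.setOf_forall]
    refine MeasurableSet.iInter fun j => ?_
    by_cases hj : β j = 0
    · simp [hj]
    · have : {ω : Ω | |βbar ω j| ≤ σ * Real.sqrt (2 * Real.log n * M j j) → β j = 0}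
          = {ω : Ω | |βbar ω j| ≤ σ * Real.sqrt (2 * Real.log n * M j j)}ᶜ := by
        ext ω; simp [hj]
      rw [this]
      have hmb : Measurable fun ω => βbar ω j := by
        have : (fun ω => βbar ω j) = fun ω => β j + f j ω := funext fun ω => hdec ω j
        rw [this]
        exact measurable_const.add (hfmeas j)
      exact (measurableSet_le hmb.abs measurable_const).compl
  -- summing up
  have hm0 : (0:ℝ) < m := by exact_mod_cast hm1
  have hfinal_real : (m : ℝ) * (2 * Real.exp (-u ^ 2 / 2))
      ≤ 2 * Real.exp (-(1 / 2) * (u - w) ^ 2) := by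
    have hw2 : w ^ 2 = 2 * Real.log m := Real.sq_sqrt (by positivity)
    calc (m : ℝ) * (2 * Real.exp (-u ^ 2 / 2))
        = 2 * (Real.exp (Real.log m) * Real.exp (-u ^ 2 / 2)) := by
          rw [Real.exp_log hm0]; ring
      _ = 2 * Real.exp (Real.log m + -u ^ 2 / 2) := by rw [Real.exp_add]
      _ ≤ 2 * Real.exp (-(1 / 2) * (u - w) ^ 2) := by
          refine mul_le_mul_of_nonneg_left (Real.exp_le_exp.mpr ?_) (by norm_num)
          have huw : w * w ≤ u * w := mul_le_mul_of_nonneg_right hularge hw0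
          nlinarith [hw2, huw]
  have hcompl : P Gᶜ ≤ ENNReal.ofReal (2 * Real.exp (-(1 / 2) * (u - w) ^ 2)) := by
    calc P Gᶜ ≤ P (⋃ j ∈ J, B j) := measure_mono hsub
      _ ≤ ∑ j ∈ J, P (B j) := measure_biUnion_finset_le _ _
      _ ≤ ∑ j ∈ J, ENNReal.ofReal (2 * Real.exp (-u ^ 2 / 2)) := by
          refine Finset.sum_le_sum fun j hjJ => htail j ?_
          simpa [hJ] using hjJ
      _ = (J.card : ℝ≥0∞) * ENNReal.ofReal (2 * Real.exp (-u ^ 2 / 2)) := by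
          rw [Finset.sum_const, nsmul_eq_mul]
      _ = ENNReal.ofReal ((m : ℝ) * (2 * Real.exp (-u ^ 2 / 2))) := by
          rw [hcard, ← ENNReal.ofReal_natCast m,
            ← ENNReal.ofReal_mul (by positivity)]
      _ ≤ _ := ENNReal.ofReal_le_ofReal hfinal_real
  have hPG : P G = 1 - P Gᶜ := by
    rw [prob_compl_eq_one_sub hGmeas, ENNReal.sub_sub_cancel ENNReal.one_ne_top prob_le_one]
  calc ENNReal.ofReal (1 - 2 * Real.exp (-(1 / 2) * (u - w) ^ 2))
      = 1 - ENNReal.ofReal (2 * Real.exp (-(1 / 2) * (u - w) ^ 2)) := by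
        rw [ENNReal.ofReal_sub _ (by positivity), ENNReal.ofReal_one]
    _ ≤ 1 - P Gᶜ := tsub_le_tsub_left hcompl 1
    _ = P G := hPG.symm
end

section
/- Let p, q, n be positive integers with q ≤ p and let K ⊆ {1,…,p} with |K| = p − q. Suppose that for each j ∈ K the random variables B_j^1,…,B_j^n are independent Bernoulli(θ_j) with θ_j ≤ 2/n. If the threshold probability p_c satisfies p_c ≥ 4/n, then the false discovery probability of the BIP estimator satisfies 1 − P(K ⊆ K̂_BIP) = P( ∃ j ∈ K : (1/n)∑_{b=1}^n B_j^b > p_c ) ≤ (p − q)·exp(2/3 − n p_c/3). In particular the false discovery probability is O(p·e^{−n}) when p_c is a fixed constant. (Theorem 4.1(i), via the Chernoff upper tail for Binomial(n, 2/n).) -/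
open MeasureTheory ProbabilityTheory
open scoped ENNReal

lemma iIndepFun_fixed_fst {Ω : Type*} [MeasurableSpace Ω] {P : Measure Ω}
    {p n : ℕ} {B : Fin p → Fin n → Ω → ℝ}
    (h : iIndepFun
      (fun (jb : Fin p × Fin n) ω => B jb.1 jb.2 ω) P) (j : Fin p) :
    iIndepFun (fun b => B j b) P := by
  classical
  rw [iIndepFun_iff_measure_inter_preimage_eq_mul] at h ⊢
  intro S sets hsets
  let emb : Fin n ↪ Fin p × Fin n := ⟨fun b => (j, b), fun a b hab => by simpa using hab⟩
  have hemb : ∀ b, emb b = (j, b) := fun b => rfl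
  let sets' : Fin p × Fin n → Set ℝ := fun i => if i.1 = j then sets i.2 else Set.univ
  have hsets' : ∀ i ∈ S.map emb, MeasurableSet (sets' i) := by
    intro i hi
    rcases Finset.mem_map.mp hi with ⟨b, hb, rfl⟩
    simpa [sets', hemb] using hsets b hb
  have key := h (S.map emb) hsets'
  have h1 : (⋂ i ∈ S.map emb, (fun ω => B i.1 i.2 ω) ⁻¹' sets' i)
      = ⋂ b ∈ S, B j b ⁻¹' sets b := by
    ext ω; simp [sets', hemb, Finset.mem_map]
  have h2 : ∏ i ∈ S.map emb, P ((fun ω => B i.1 i.2 ω) ⁻¹' sets' i)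
      = ∏ b ∈ S, P (B j b ⁻¹' sets b) := by
    rw [Finset.prod_map]
    exact Finset.prod_congr rfl fun b _ => by simp [sets', hemb]
  rw [h1, h2] at key
  exact key

/-- Chernoff-based false discovery bound for the bagging inclusion probability
(BIP) estimator: `Bⱼᵇ` are independent `{0,1}`-valued Bernoulli(`θⱼ`) indicators with `θⱼ ≤ 2/n`
for every non-active index `j ∈ K` (`|K| = p − q`); if `p_c ≥ 4/n` then
`1 − P(K ⊆ K̂_BIP) ≤ (p − q)·exp(2/3 − n p_c/3)`, where
`K̂_BIP = {j : (1/n)∑_b Bⱼᵇ ≤ p_c}`. -/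
theorem bip_false_discovery_probability_chernoff
    {Ω : Type*} [MeasurableSpace Ω] (P : Measure Ω) [IsProbabilityMeasure P]
    (p q n : ℕ) (hn : 0 < n) (hqp : q ≤ p)
    (K : Finset (Fin p)) (hK : K.card = p - q)
    (θ : Fin p → ℝ) (hθ0 : ∀ j, 0 ≤ θ j) (hθ1 : ∀ j, θ j ≤ 1)
    (hθK : ∀ j ∈ K, θ j ≤ 2 / n)
    (B : Fin p → Fin n → Ω → ℝ)
    (hBmeas : ∀ j b, Measurable (B j b))
    (hB01 : ∀ j b ω, B j b ω = 0 ∨ B j b ω = 1)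
    (hBlaw : ∀ j b, P {ω | B j b ω = 1} = ENNReal.ofReal (θ j))
    (hindep : iIndepFun
      (fun (jb : Fin p × Fin n) ω => B jb.1 jb.2 ω) P)
    (pc : ℝ) (hpc0 : 0 < pc) (hpc1 : pc < 1) (hpc : 4 / n ≤ pc) :
    (1 : ℝ≥0∞) - P {ω | ∀ j ∈ K, (1 / n : ℝ) * ∑ b : Fin n, B j b ω ≤ pc}
      ≤ ENNReal.ofReal (((p : ℝ) - q) * Real.exp (2 / 3 - n * pc / 3)) := by
  classical
  have hn' : (0:ℝ) < n := by exact_mod_cast hn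
  set c : ℝ := Real.exp (2 / 3 - n * pc / 3) with hc
  have hSmeas : ∀ j : Fin p, Measurable (fun ω => ∑ b : Fin n, B j b ω) :=
    fun j => Finset.measurable_sum _ fun b _ => hBmeas j b
  have hA : MeasurableSet {ω | ∀ j ∈ K, (1 / n : ℝ) * ∑ b : Fin n, B j b ω ≤ pc} := by
    have heq : {ω | ∀ j ∈ K, (1 / n : ℝ) * ∑ b : Fin n, B j b ω ≤ pc}
        = ⋂ j ∈ K, {ω | (1 / n : ℝ) * ∑ b : Fin n, B j b ω ≤ pc} := by
      ext ω; simp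
    rw [heq]
    exact MeasurableSet.biInter (Set.to_countable _) fun j _ =>
      measurableSet_le ((hSmeas j).const_mul _) measurable_const
  rw [← prob_compl_eq_one_sub hA]
  have hcompl : {ω | ∀ j ∈ K, (1 / n : ℝ) * ∑ b : Fin n, B j b ω ≤ pc}ᶜ
      = ⋃ j ∈ K, {ω | pc < (1 / n : ℝ) * ∑ b : Fin n, B j b ω} := by
    ext ω; simp [not_le]
  rw [hcompl]
  refine le_trans (measure_biUnion_finset_le K _) ?_
  have hbound : ∀ j ∈ K, P {ω | pc < (1 / n : ℝ) * ∑ b : Fin n, B j b ω}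
      ≤ ENNReal.ofReal c := by
    intro j hj
    have hindj := iIndepFun_fixed_fst hindep j
    have hX0 : ∀ b ω, (0:ℝ) ≤ B j b ω := fun b ω => by
      rcases hB01 j b ω with h | h <;> simp [h]
    have hXle : ∀ b ω, B j b ω ≤ 1 := fun b ω => by
      rcases hB01 j b ω with h | h <;> simp [h]
    have hSle : ∀ ω, (∑ b : Fin n, B j b ω) ≤ n := by
      intro ω
      calc ∑ b : Fin n, B j b ω ≤ ∑ _b : Fin n, (1:ℝ) :=
            Finset.sum_le_sum fun b _ => hXle b ω
        _ = n := by simp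
    have hexp : ∀ b ω, Real.exp (Real.log 2 * B j b ω) = 1 + B j b ω := by
      intro b ω
      rcases hB01 j b ω with h | h
      · simp [h]
      · rw [h, mul_one, Real.exp_log two_pos]; norm_num
    have hint : Integrable (fun ω => Real.exp (Real.log 2 * ∑ b : Fin n, B j b ω)) P := by
      refine Integrable.mono' (integrable_const (Real.exp (Real.log 2 * n)))
        (((hSmeas j).const_mul _).exp).aestronglyMeasurable ?_
      refine Filter.Eventually.of_forall fun ω => ?_
      rw [Real.norm_eq_abs, abs_of_pos (Real.exp_pos _)]
      exact Real.exp_le_exp.mpr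
        (mul_le_mul_of_nonneg_left (hSle ω) (Real.log_nonneg one_le_two))
    have hBindic : ∀ b, B j b = Set.indicator {ω | B j b ω = 1} (fun _ => (1:ℝ)) := by
      intro b
      ext ω
      rcases hB01 j b ω with h | h
      · simp [Set.indicator_apply, h]
      · simp [Set.indicator_apply, h]
    have hBsetmeas : ∀ b, MeasurableSet {ω | B j b ω = 1} := fun b =>
      (hBmeas j b) (measurableSet_singleton 1)
    have hBint : ∀ b, Integrable (B j b) P := by
      intro b
      rw [hBindic b]
      rw [integrable_indicator_iff (hBsetmeas b)]
      exact integrableOn_const (measure_ne_top _ _)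
    have hBmean : ∀ b, ∫ ω, B j b ω ∂P = θ j := by
      intro b
      have : ∫ ω, B j b ω ∂P
          = ∫ ω, Set.indicator {ω | B j b ω = 1} (fun _ => (1:ℝ)) ω ∂P := by
        rw [← hBindic b]
      rw [this, integral_indicator_const (1:ℝ) (hBsetmeas b), measureReal_def, hBlaw j b,
        ENNReal.toReal_ofReal (hθ0 j), smul_eq_mul, mul_one]
    have hmgf1 : ∀ b, mgf (B j b) P (Real.log 2) = 1 + θ j := by
      intro b
      simp only [mgf]
      have : (fun ω => Real.exp (Real.log 2 * B j b ω)) = fun ω => 1 + B j b ω :=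
        funext (hexp b)
      rw [this, integral_add (integrable_const 1) (hBint b), hBmean b]
      simp
    have hsum_eq : (∑ b : Fin n, B j b) = fun ω => ∑ b : Fin n, B j b ω := by
      ext ω; simp
    have hmgfS : mgf (fun ω => ∑ b : Fin n, B j b ω) P (Real.log 2) = (1 + θ j) ^ n := by
      rw [← hsum_eq, hindj.mgf_sum (fun b => hBmeas j b) Finset.univ]
      simp [hmgf1]
    have hcher := measure_ge_le_exp_mul_mgf (μ := P)
      (X := fun ω => ∑ b : Fin n, B j b ω) ((n : ℝ) * pc)
      (Real.log_nonneg one_le_two) hint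
    rw [hmgfS] at hcher
    have hnpc : (4:ℝ) ≤ n * pc := by
      have := (div_le_iff₀ hn').mp hpc
      linarith [this]
    have hnum : Real.exp (-Real.log 2 * ((n:ℝ) * pc)) * (1 + θ j) ^ n ≤ c := by
      have h1 : (1 + θ j) ^ n ≤ Real.exp 2 := by
        have h2 : (1 + θ j) ^ n ≤ Real.exp (θ j) ^ n := by
          apply pow_le_pow_left₀ (by linarith [hθ0 j])
          linarith [Real.add_one_le_exp (θ j)]
        have h3 : Real.exp (θ j) ^ n = Real.exp (n * θ j) := by
          rw [← Real.exp_nat_mul]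
        have h4 : (n:ℝ) * θ j ≤ 2 := by
          have := hθK j hj
          have := (le_div_iff₀ hn').mp (by linarith [hθK j hj] : θ j ≤ 2 / n)
          linarith [mul_comm (n:ℝ) (θ j) ▸ this]
        calc (1 + θ j) ^ n ≤ Real.exp (n * θ j) := h3 ▸ h2
          _ ≤ Real.exp 2 := Real.exp_le_exp.mpr h4
      calc Real.exp (-Real.log 2 * ((n:ℝ) * pc)) * (1 + θ j) ^ n
          ≤ Real.exp (-Real.log 2 * ((n:ℝ) * pc)) * Real.exp 2 := by
            exact mul_le_mul_of_nonneg_left h1 (Real.exp_pos _).le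
        _ = Real.exp (2 - (n:ℝ) * pc * Real.log 2) := by
            rw [← Real.exp_add]; ring_nf
        _ ≤ c := by
            rw [hc]
            apply Real.exp_le_exp.mpr
            nlinarith [Real.log_two_gt_d9, hnpc]
    have htoReal : (P {ω | (n:ℝ) * pc ≤ ∑ b : Fin n, B j b ω}).toReal ≤ c :=
      le_trans hcher hnum
    have hsub : {ω | pc < (1 / n : ℝ) * ∑ b : Fin n, B j b ω}
        ⊆ {ω | (n:ℝ) * pc ≤ ∑ b : Fin n, B j b ω} := by
      intro ω hω
      simp only [Set.mem_setOf_eq] at hω ⊢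
      rw [one_div_mul_eq_div] at hω
      have := (lt_div_iff₀ hn').mp hω
      linarith [this]
    refine le_trans (measure_mono hsub) ?_
    rw [ENNReal.le_ofReal_iff_toReal_le (measure_ne_top _ _) (Real.exp_pos _).le]
    exact htoReal
  calc ∑ j ∈ K, P {ω | pc < (1 / n : ℝ) * ∑ b : Fin n, B j b ω}
      ≤ ∑ _j ∈ K, ENNReal.ofReal c := Finset.sum_le_sum hbound
    _ = K.card • ENNReal.ofReal c := by rw [Finset.sum_const]
    _ = ENNReal.ofReal (((p:ℝ) - q) * c) := by
        rw [hK, nsmul_eq_mul, ← ENNReal.ofReal_natCast (p - q),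
          ← ENNReal.ofReal_mul (by positivity)]
        congr 2
        rw [Nat.cast_sub hqp]
end
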